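/- Let D be i.i.d. data from a compositional graphoid P over V, and consider the grow procedure which, starting from M = ∅, repeatedly adds the variable Y ∈ Z \ M maximizing BIC(X, M ∪ {Y}), stopping when no addition increases the score. In the large sample limit (where score increase from adding Y to conditioning set S holds iff Y is dependent on X given S), the output M_gr contains the unique Markov boundary: MB(X, Z) ⊆ M_gr. -/

import Mathlib

open Classical
attribute [local instance] Classical.propDecidable

variable {V : Type} [Fintype V] [DecidableEq V]

/-- A conditional independence model over variable set `V`:
`I A B C` means `A` is independent of `B` given `C`. -/
abbrev IndepModel (V : Type) :=
  Finset V → Finset V → Finset V → Prop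

/-- Semigraphoid axioms. -/
structure Semigraphoid (I : IndepModel V) : Prop where
  symm : ∀ A B C, I A B C → I B A C
  decomposition : ∀ A B W C, I A (B ∪ W) C → I A B C ∧ I A W C
  weakUnion : ∀ A B W C, I A (B ∪ W) C → I A B (C ∪ W)
  contraction : ∀ A B W C, I A B C → I A W (C ∪ B) → I A (B ∪ W) C

/-- Graphoid axioms. -/
structure Graphoid (I : IndepModel V) extends Semigraphoid I : Prop where
  intersection : ∀ A B W C, I A B (C ∪ W) → I A W (C ∪ B) → I A (B ∪ W) C

/-- Compositional graphoid axioms. -/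
structure CompGraphoid (I : IndepModel V) extends Graphoid I : Prop where
  composition : ∀ A B W C, I A B C → I A W C → I A (B ∪ W) C

/-- `M` is a Markov blanket of `X` relative to `Z`. -/
def MarkovBlanket (I : IndepModel V) (X : V) (Z M : Finset V) : Prop :=
  M ⊆ Z ∧ I {X} (Z \ M) M

/-- `M` is a Markov boundary (minimal Markov blanket) of `X` relative to `Z`. -/
def MarkovBoundary (I : IndepModel V) (X : V) (Z M : Finset V) : Prop :=
  MarkovBlanket I X Z M ∧ ∀ M' ⊂ M, ¬ I {X} (Z \ M') M'

/-- A directed graph on `V`, given by its finite set of directed edges. -/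
abbrev EdgeSet (V : Type) := Finset (V × V)

def Adj (E : EdgeSet V) (a b : V) : Prop := (a, b) ∈ E

/-- Acyclicity: no vertex reaches itself by a nontrivial directed path. -/
def IsDAG (E : EdgeSet V) : Prop := ∀ v, ¬ Relation.TransGen (Adj E) v v

def parents (E : EdgeSet V) (v : V) : Finset V :=
  (E.filter (fun e => e.2 = v)).image Prod.fst

def IsCollider (E : EdgeSet V) (x y z : V) : Prop := Adj E x y ∧ Adj E z y

/-- The middle vertex `y` of a path triple `x - y - z` does not block the path
given conditioning set `C`. -/
def ActiveTriple (E : EdgeSet V) (C : Finset V) (x y z : V) : Prop :=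
  (IsCollider E x y z ∧ ∃ d ∈ C, Relation.ReflTransGen (Adj E) y d) ∨
  (¬ IsCollider E x y z ∧ y ∉ C)

/-- `a` and `b` are d-connected given `C` in the graph `E`. -/
def DConn (E : EdgeSet V) (C : Finset V) (a b : V) : Prop :=
  ∃ p : List V, 2 ≤ p.length ∧ p.head? = some a ∧ p.getLast? = some b ∧
    (∀ (i : ℕ) (h : i + 1 < p.length),
      Adj E (p.get ⟨i, by omega⟩) (p.get ⟨i + 1, h⟩) ∨
      Adj E (p.get ⟨i + 1, h⟩) (p.get ⟨i, by omega⟩)) ∧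
    (∀ (i : ℕ) (h : i + 2 < p.length),
      ActiveTriple E C (p.get ⟨i, by omega⟩) (p.get ⟨i + 1, by omega⟩) (p.get ⟨i + 2, h⟩))

/-- `A` and `B` are d-separated given `C`. -/
def DSep (E : EdgeSet V) (A B C : Finset V) : Prop :=
  ∀ a ∈ A, ∀ b ∈ B, ¬ DConn E C a b

def PairwiseDisjoint3 (A B C : Finset V) : Prop :=
  Disjoint A B ∧ Disjoint A C ∧ Disjoint B C

/-- `I(G) ⊆ I(P)`: every d-separation of the graph is an independence of `I`. -/
def Markovian (E : EdgeSet V) (I : IndepModel V) : Prop :=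
  ∀ A B C, PairwiseDisjoint3 A B C → DSep E A B C → I A B C

/-- `I(P) ⊆ I(G)`: every independence of `I` is a d-separation of the graph. -/
def FaithfulTo (E : EdgeSet V) (I : IndepModel V) : Prop :=
  ∀ A B C, PairwiseDisjoint3 A B C → I A B C → DSep E A B C

/-- `I(E) ⊆ I(E')` : every d-separation statement of `E` holds in `E'`. -/
def ISub (E E' : EdgeSet V) : Prop :=
  ∀ A B C, PairwiseDisjoint3 A B C → DSep E A B C → DSep E' A B C

/-- Markov equivalence: same d-separation statements. -/
def MEquiv (E E' : EdgeSet V) : Prop := ISub E E' ∧ ISub E' E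

/-- Markovian DAGs. -/
def CMC (I : IndepModel V) : Set (EdgeSet V) := {G | IsDAG G ∧ Markovian G I}

/-- Faithful DAGs. -/
def CFC (I : IndepModel V) : Set (EdgeSet V) := {G | G ∈ CMC I ∧ FaithfulTo G I}

/-- SGS-minimal DAGs: Markovian with no Markovian proper subgraph. -/
def SGSmin (I : IndepModel V) : Set (EdgeSet V) :=
  {G | G ∈ CMC I ∧ ∀ G' ⊆ G, G' ∈ CMC I → G' = G}

/-- Frugal DAGs: Markovian with minimal edge count. -/
def Fr (I : IndepModel V) : Set (EdgeSet V) :=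
  {G | G ∈ CMC I ∧ ∀ G' ∈ CMC I, G.card ≤ G'.card}

/-- Uniquely frugal DAGs. -/
def uFr (I : IndepModel V) : Set (EdgeSet V) :=
  {G | G ∈ Fr I ∧ ∀ G' ∈ Fr I, MEquiv G' G}

/-- P-minimal DAGs: Markovian `G` such that no Markovian `G'` has `I(G) ⊊ I(G')`. -/
def Pm (I : IndepModel V) : Set (EdgeSet V) :=
  {G | G ∈ CMC I ∧ ∀ G' ∈ CMC I, ISub G G' → ISub G' G}

/-- Uniquely P-minimal DAGs. -/
def uPm (I : IndepModel V) : Set (EdgeSet V) :=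
  {G | G ∈ Pm I ∧ ∀ G' ∈ Pm I, MEquiv G' G}

/-- A list is a permutation of the vertices of `V`. -/
def IsPermList (π : List V) : Prop := π.Nodup ∧ ∀ v : V, v ∈ π

/-- The set of vertices preceding `k` in the permutation `π`. -/
def pre (π : List V) (k : V) : Finset V := (π.takeWhile (fun x => x != k)).toFinset

/-- The DAG induced from a permutation `π` by the Raskutti–Uhler (RU) construction:
`j → k` is an edge iff `j` precedes `k` in `π` and `X_j` is dependent on `X_k`
given all other predecessors of `k`. -/
noncomputable def RUedges (I : IndepModel V) (π : List V) : EdgeSet V :=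
  Finset.univ.filter
    (fun e => e.1 ∈ pre π e.2 ∧ ¬ I {e.1} {e.2} ((pre π e.2).erase e.1))

/-- `j → k` is a covered edge of `E`. -/
def CoveredEdge (E : EdgeSet V) (j k : V) : Prop :=
  (j, k) ∈ E ∧ parents E j = (parents E k).erase j

/-- `j → k` is a singular edge of `E`: no directed path from `j` to `k` other than
the edge itself. -/
def SingularEdge (E : EdgeSet V) (j k : V) : Prop :=
  (j, k) ∈ E ∧
    ∀ i, Relation.TransGen (Adj E) j i → Relation.TransGen (Adj E) i k → i = j ∨ i = k

/-- `π` is a causal order of the graph `E`: every ancestor of a vertex precedes it. -/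
def CausalOrder (E : EdgeSet V) (π : List V) : Prop :=
  IsPermList π ∧ ∀ a b, Relation.TransGen (Adj E) a b → π.idxOf a < π.idxOf b

/-- Two permutations differ by one adjacent transposition. -/
def AdjTrans (π τ : List V) : Prop :=
  ∃ (δ₁ δ₂ : List V) (a b : V), π = δ₁ ++ a :: b :: δ₂ ∧ τ = δ₁ ++ b :: a :: δ₂

/-- The non-descendants of `j` in the graph `E`. -/
noncomputable def nonDesc (E : EdgeSet V) (j : V) : Finset V :=
  Finset.univ.filter (fun i => ¬ Relation.ReflTransGen (Adj E) j i)

lemma comp_finset_aux (I : IndepModel V) (hG : CompGraphoid I) (A C : Finset V)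
    (S : Finset V) (hS : S.Nonempty) (h : ∀ y ∈ S, I A {y} C) : I A S C := by
  induction S using Finset.cons_induction with
  | empty => exact absurd hS (by simp)
  | cons a S ha ih =>
    rcases S.eq_empty_or_nonempty with rfl | hne
    · simpa using h a (by simp)
    · have h1 : I A {a} C := h a (by simp)
      have h2 : I A S C := ih hne (fun y hy => h y (by simp [hy]))
      have := hG.composition A {a} S C h1 h2
      have heq : ({a} ∪ S : Finset V) = Finset.cons a S ha := by
        rw [Finset.cons_eq_insert]; ext x; simp
      rwa [heq] at this

lemma mb_inter_aux (I : IndepModel V) (hG : CompGraphoid I) (X : V) (Z M N : Finset V)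
    (hM : M ⊆ Z) (hN : N ⊆ Z) (hIM : I {X} (Z \ M) M) (hIN : I {X} (Z \ N) N) :
    I {X} (Z \ (M ∩ N)) (M ∩ N) := by
  have eq1 : (Z \ N : Finset V) = (M \ N) ∪ (Z \ (M ∪ N)) := by
    ext x
    have h1 := @hM x
    have h2 := @hN x
    simp only [Finset.mem_sdiff, Finset.mem_union]
    tauto
  rw [eq1] at hIN
  have h2 := hG.weakUnion {X} (M \ N) (Z \ (M ∪ N)) N hIN
  have eq2 : (N ∪ (Z \ (M ∪ N)) : Finset V) = (M ∩ N) ∪ (Z \ M) := by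
    ext x
    have h1 := @hM x
    have h2 := @hN x
    simp only [Finset.mem_sdiff, Finset.mem_union, Finset.mem_inter]
    tauto
  rw [eq2] at h2
  have eq3 : (M : Finset V) = (M ∩ N) ∪ (M \ N) := by
    ext x
    simp only [Finset.mem_sdiff, Finset.mem_union, Finset.mem_inter]
    tauto
  have hIM' : I {X} (Z \ M) ((M ∩ N) ∪ (M \ N)) := by rw [← eq3]; exact hIM
  have h4 := hG.intersection {X} (Z \ M) (M \ N) (M ∩ N) hIM' h2
  have eq4 : ((Z \ M) ∪ (M \ N) : Finset V) = Z \ (M ∩ N) := by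
    ext x
    have h1 := @hM x
    simp only [Finset.mem_sdiff, Finset.mem_union, Finset.mem_inter]
    tauto
  rwa [eq4] at h4

/-- in the large-sample limit, the greedy grow procedure started from
`∅` outputs a superset of the unique Markov boundary, for a compositional graphoid. -/
theorem grow_contains_markov_boundary (I : IndepModel V) (hG : CompGraphoid I)
    (X : V) (Z : Finset V) (hXZ : X ∉ Z)
    (s : V → Finset V → ℝ)
    (hscore : ∀ (Y : V) (S : Finset V), Y ∉ S →
      ((s X S < s X (insert Y S) ↔ ¬ I {X} {Y} S) ∧
       (s X (insert Y S) < s X S ↔ I {X} {Y} S)))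
    (n : ℕ) (Ms : ℕ → Finset V) (h0 : Ms 0 = ∅)
    (hstep : ∀ i < n, ∃ Y ∈ Z \ Ms i,
      Ms (i + 1) = insert Y (Ms i) ∧
      s X (Ms i) < s X (insert Y (Ms i)) ∧
      ∀ Y' ∈ Z \ Ms i, s X (insert Y' (Ms i)) ≤ s X (insert Y (Ms i)))
    (hterm : ∀ Y ∈ Z \ Ms n, s X (insert Y (Ms n)) ≤ s X (Ms n)) :
    ∀ M, MarkovBoundary I X Z M → M ⊆ Ms n := by
  intro M hMbd
  obtain ⟨⟨hMZ, hIM⟩, hmin⟩ := hMbd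
  -- Ms n ⊆ Z
  have hsub : ∀ i, i ≤ n → Ms i ⊆ Z := by
    intro i
    induction i with
    | zero => intro _; simp [h0]
    | succ i ih =>
      intro hi
      obtain ⟨Y, hY, heq, _⟩ := hstep i (by omega)
      rw [heq]
      exact Finset.insert_subset (Finset.mem_sdiff.mp hY).1 (ih (by omega))
  have hNZ : Ms n ⊆ Z := hsub n le_rfl
  rcases (Z \ Ms n).eq_empty_or_nonempty with hemp | hne
  · have : Z ⊆ Ms n := by
      intro x hx
      by_contra hxn
      have : x ∈ Z \ Ms n := Finset.mem_sdiff.mpr ⟨hx, hxn⟩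
      simp [hemp] at this
    exact hMZ.trans this
  · -- each Y in Z \ Ms n is independent of X given Ms n
    have hind : ∀ Y ∈ Z \ Ms n, I {X} {Y} (Ms n) := by
      intro Y hY
      have hYn : Y ∉ Ms n := (Finset.mem_sdiff.mp hY).2
      have := (hscore Y (Ms n) hYn).1
      by_contra hdep
      have := this.mpr hdep
      exact absurd (hterm Y hY) (not_le.mpr this)
    have hIN : I {X} (Z \ Ms n) (Ms n) :=
      comp_finset_aux I hG {X} (Ms n) (Z \ Ms n) hne hind
    have hK : I {X} (Z \ (M ∩ Ms n)) (M ∩ Ms n) :=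
      mb_inter_aux I hG X Z M (Ms n) hMZ hNZ hIM hIN
    by_contra hns
    have hss : M ∩ Ms n ⊂ M := by
      refine Finset.ssubset_iff_subset_ne.mpr ⟨Finset.inter_subset_left, ?_⟩
      intro heq
      apply hns
      intro x hx
      have : x ∈ M ∩ Ms n := by rw [heq]; exact hx
      exact (Finset.mem_inter.mp this).2
    exact hmin (M ∩ Ms n) hss hK
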